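/- The average of the function V(x₁,x₂) = |x₁ x₂| / (x₁² + x₂²) over the square [-1,1]² differs from its average over the unit disk B(0,1): (1/4)∫_{[-1,1]²} V dx = (1/2)log 2 ≠ 1/π = (1/π)∫_{B(0,1)} V dx. -/

import Mathlib

open MeasureTheory Real Set intervalIntegral

noncomputable def Vf : ℝ × ℝ → ℝ := fun p => |p.1 * p.2| / (p.1 ^ 2 + p.2 ^ 2)

lemma Vf_meas : Measurable Vf := by
  unfold Vf; measurability

lemma Vf_bound (p : ℝ × ℝ) : |Vf p| ≤ 1/2 := by
  unfold Vf
  rcases eq_or_ne (p.1 ^ 2 + p.2 ^ 2) 0 with h | h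
  · simp [h]
  · have hpos : 0 < p.1 ^ 2 + p.2 ^ 2 := lt_of_le_of_ne (by positivity) (Ne.symm h)
    rw [abs_div, abs_abs, abs_of_pos hpos, div_le_iff₀ hpos]
    have := abs_mul p.1 p.2
    nlinarith [abs_nonneg (p.1 * p.2), sq_abs (p.1 * p.2), sq_nonneg (|p.1| - |p.2|),
      sq_abs p.1, sq_abs p.2, abs_mul p.1 p.2]

lemma Vf_cont (x : ℝ) (hx : x ≠ 0) : Continuous fun y => Vf (x, y) := by
  unfold Vf
  exact (continuous_abs.comp (continuous_const.mul continuous_id)).div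
    (by continuity) (fun y => by positivity)

lemma inner_int (x : ℝ) (hx : x ≠ 0) :
    ∫ y in Icc (-1:ℝ) 1, Vf (x, y) = |x| * (Real.log (x^2+1) - Real.log (x^2)) := by
  have hcont := Vf_cont x hx
  rw [integral_Icc_eq_integral_Ioc, ← intervalIntegral.integral_of_le (by norm_num : (-1:ℝ) ≤ 1)]
  have hsplit : (∫ y in (-1:ℝ)..0, Vf (x, y)) + (∫ y in (0:ℝ)..1, Vf (x, y))
      = ∫ y in (-1:ℝ)..1, Vf (x, y) :=
    intervalIntegral.integral_add_adjacent_intervals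
      (hcont.intervalIntegrable _ _) (hcont.intervalIntegrable _ _)
  have heven : (∫ y in (-1:ℝ)..0, Vf (x, y)) = ∫ y in (0:ℝ)..1, Vf (x, y) := by
    have := intervalIntegral.integral_comp_neg (a := (0:ℝ)) (b := 1) (fun y => Vf (x, y))
    simp only [neg_zero, neg_neg] at this
    rw [← this]
    apply intervalIntegral.integral_congr
    intro y _
    unfold Vf
    simp [mul_comm, abs_mul]
  have hI : (∫ y in (0:ℝ)..1, Vf (x, y)) = |x|/2 * (Real.log (x^2+1) - Real.log (x^2)) := by
    have hFTC := intervalIntegral.integral_eq_sub_of_hasDerivAt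
      (f := fun y => |x|/2 * Real.log (x^2 + y^2)) (f' := fun y => Vf (x, y))
      (a := 0) (b := 1) ?_ (hcont.intervalIntegrable _ _)
    · rw [hFTC]; simp; ring
    · intro y hy
      rw [uIcc_of_le (by norm_num)] at hy
      have hy0 : 0 ≤ y := hy.1
      have hden : x^2 + y^2 ≠ 0 := by positivity
      have h1 : HasDerivAt (fun y : ℝ => x^2 + y^2) (2*y) y := by
        simpa using ((hasDerivAt_pow 2 y).const_add (x^2))
      have h2 := (h1.log hden).const_mul (|x|/2)
      refine h2.congr_deriv (Eq.symm ?_)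
      show |x * y| / (x ^ 2 + y ^ 2) = _
      rw [abs_mul, abs_of_nonneg hy0]
      field_simp
  rw [← hsplit, heven, hI]; ring

noncomputable def hf : ℝ → ℝ := fun x => |x| * (Real.log (x^2+1) - Real.log (x^2))

lemma hf_cont : Continuous hf := by
  have h1 : Continuous fun x : ℝ => |x| * Real.log (x^2+1) :=
    continuous_abs.mul (((continuous_pow 2).add continuous_const).log (fun x => by dsimp; positivity))
  have h2 : Continuous fun x : ℝ => |x| * Real.log (x^2) := by
    have : (fun x : ℝ => |x| * Real.log (x^2)) = fun x => 2 * (|x| * Real.log |x|) := by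
      funext x
      rw [← Real.log_abs, abs_pow, Real.log_pow]
      push_cast; ring
    rw [this]
    exact continuous_const.mul (Real.continuous_mul_log.comp continuous_abs)
  have : hf = fun x => |x| * Real.log (x^2+1) - |x| * Real.log (x^2) := by
    funext x; unfold hf; ring
  rw [this]; exact h1.sub h2

lemma hf_int : ∫ x in (0:ℝ)..1, hf x = Real.log 2 := by
  have hcongr : ∫ x in (0:ℝ)..1, hf x = ∫ x in (0:ℝ)..1, x * (Real.log (x^2+1) - Real.log (x^2)) := by
    apply intervalIntegral.integral_congr
    intro x hx
    rw [uIcc_of_le (by norm_num)] at hx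
    unfold hf
    rw [abs_of_nonneg hx.1]
  rw [hcongr]
  have hFTC := intervalIntegral.integral_eq_sub_of_hasDerivAt_of_le
    (f := fun x => ((x^2+1) * Real.log (x^2+1) - (x^2+1))/2 - (x^2 * Real.log x - x^2/2))
    (f' := fun x => x * (Real.log (x^2+1) - Real.log (x^2)))
    (a := 0) (b := 1) (by norm_num) ?_ ?_ ?_
  · rw [hFTC]
    norm_num [Real.log_zero, Real.log_one]
    linarith
  · -- continuity of F on Icc 0 1
    apply Continuous.continuousOn
    have hc1 : Continuous fun x : ℝ => Real.log (x^2+1) :=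
      ((continuous_pow 2).add continuous_const).log (fun x => by dsimp; positivity)
    have hc2 : Continuous fun x : ℝ => x^2 * Real.log x := by
      have : (fun x : ℝ => x^2 * Real.log x) = fun x => (x * Real.log x) * x := by
        funext x; ring
      rw [this]
      exact Real.continuous_mul_log.mul continuous_id
    fun_prop
  · -- derivative
    intro x hx
    have hx0 : 0 < x := hx.1
    have hden : x^2 + 1 ≠ 0 := by positivity
    have h1 : HasDerivAt (fun x : ℝ => x^2+1) (2*x) x := by
      simpa using ((hasDerivAt_pow 2 x).add_const 1)
    have hF1 : HasDerivAt (fun x : ℝ => ((x^2+1) * Real.log (x^2+1) - (x^2+1))/2)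
        (x * Real.log (x^2+1)) x := by
      have := ((h1.mul (h1.log hden)).sub h1).div_const 2
      refine this.congr_deriv ?_
      field_simp
      ring
    have hF2 : HasDerivAt (fun x : ℝ => x^2 * Real.log x - x^2/2) (2 * x * Real.log x) x := by
      have := ((hasDerivAt_pow 2 x).mul (Real.hasDerivAt_log hx0.ne')).sub
        ((hasDerivAt_pow 2 x).div_const 2)
      refine this.congr_deriv ?_
      field_simp
      ring
    have := hF1.sub hF2
    refine this.congr_deriv (Eq.symm ?_)
    show x * (Real.log (x^2+1) - Real.log (x^2)) = _
    have hl : Real.log (x^2) = 2 * Real.log x := by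
      rw [Real.log_pow]; norm_num
    rw [hl]; ring
  · -- interval integrability
    apply IntervalIntegrable.mono_fun (hf_cont.intervalIntegrable 0 1)
    · apply Measurable.aestronglyMeasurable; measurability
    · filter_upwards [ae_restrict_mem measurableSet_uIoc] with x hx
      rw [uIoc_of_le (by norm_num)] at hx
      exact le_of_eq (by unfold hf; rw [abs_of_nonneg hx.1.le])

lemma hf_full : ∫ x in (-1:ℝ)..1, hf x = 2 * Real.log 2 := by
  have hsplit : (∫ x in (-1:ℝ)..0, hf x) + (∫ x in (0:ℝ)..1, hf x) = ∫ x in (-1:ℝ)..1, hf x :=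
    intervalIntegral.integral_add_adjacent_intervals
      (hf_cont.intervalIntegrable _ _) (hf_cont.intervalIntegrable _ _)
  have heven : (∫ x in (-1:ℝ)..0, hf x) = ∫ x in (0:ℝ)..1, hf x := by
    have := intervalIntegral.integral_comp_neg (a := (0:ℝ)) (b := 1) hf
    simp only [neg_zero, neg_neg] at this
    rw [← this]
    apply intervalIntegral.integral_congr
    intro x _
    unfold hf
    simp [neg_sq]
  rw [← hsplit, heven, hf_int]; ring

lemma square_int : ∫ p in Icc (-1:ℝ) 1 ×ˢ Icc (-1:ℝ) 1, Vf p = 2 * Real.log 2 := by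
  have hfin : volume (Icc (-1:ℝ) 1 ×ˢ Icc (-1:ℝ) 1) < ⊤ :=
    (isCompact_Icc.prod isCompact_Icc).measure_lt_top
  have hintOn : IntegrableOn Vf (Icc (-1:ℝ) 1 ×ˢ Icc (-1:ℝ) 1) volume := by
    apply Integrable.mono' (g := fun _ => (1:ℝ)/2)
    · exact integrableOn_const hfin.ne
    · exact Vf_meas.aestronglyMeasurable.restrict
    · filter_upwards with p using Vf_bound p
  rw [Measure.volume_eq_prod] at hintOn ⊢
  rw [setIntegral_prod _ hintOn]
  have h0 : ∀ᵐ x : ℝ ∂volume, x ≠ 0 := by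
    rw [ae_iff]
    simp only [not_not, Set.setOf_eq_eq_singleton]
    exact measure_singleton 0
  rw [integral_Icc_eq_integral_Ioc, ← intervalIntegral.integral_of_le (by norm_num : (-1:ℝ) ≤ 1)]
  rw [show (∫ x in (-1:ℝ)..1, (∫ y in Icc (-1:ℝ) 1, Vf (x, y))) = ∫ x in (-1:ℝ)..1, hf x from
    intervalIntegral.integral_congr_ae (by filter_upwards [h0] with x hx _; exact inner_int x hx)]
  exact hf_full

lemma ang_cont : Continuous fun θ : ℝ => |Real.cos θ * Real.sin θ| :=
  (Real.continuous_cos.mul Real.continuous_sin).abs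

lemma ang_q1 : ∫ θ in (0:ℝ)..(Real.pi/2), |Real.cos θ * Real.sin θ| = 1/2 := by
  have hcongr : ∫ θ in (0:ℝ)..(Real.pi/2), |Real.cos θ * Real.sin θ|
      = ∫ θ in (0:ℝ)..(Real.pi/2), Real.cos θ * Real.sin θ := by
    apply intervalIntegral.integral_congr
    intro θ hθ
    rw [uIcc_of_le (by positivity)] at hθ
    have hc : 0 ≤ Real.cos θ := Real.cos_nonneg_of_mem_Icc
      ⟨by linarith [hθ.1, Real.pi_pos], hθ.2⟩
    have hs : 0 ≤ Real.sin θ := Real.sin_nonneg_of_nonneg_of_le_pi hθ.1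
      (by linarith [hθ.2, Real.pi_pos])
    exact abs_of_nonneg (mul_nonneg hc hs)
  rw [hcongr]
  have hFTC := intervalIntegral.integral_eq_sub_of_hasDerivAt
    (f := fun θ => Real.sin θ ^ 2 / 2) (f' := fun θ => Real.cos θ * Real.sin θ)
    (a := 0) (b := Real.pi/2) ?_
    ((Real.continuous_cos.mul Real.continuous_sin).intervalIntegrable _ _)
  · rw [hFTC]; simp [Real.sin_pi_div_two]
  · intro θ _
    have := ((Real.hasDerivAt_sin θ).pow 2).div_const 2
    refine this.congr_deriv ?_
    push_cast; ring

lemma ang_q2 : ∫ θ in (Real.pi/2)..Real.pi, |Real.cos θ * Real.sin θ| = 1/2 := by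
  have hpi := Real.pi_pos
  have hcongr : ∫ θ in (Real.pi/2)..Real.pi, |Real.cos θ * Real.sin θ|
      = ∫ θ in (Real.pi/2)..Real.pi, -(Real.cos θ * Real.sin θ) := by
    apply intervalIntegral.integral_congr
    intro θ hθ
    rw [uIcc_of_le (by linarith)] at hθ
    obtain ⟨h1, h2⟩ := hθ
    have hc : Real.cos θ ≤ 0 := Real.cos_nonpos_of_pi_div_two_le_of_le h1 (by linarith)
    have hs : 0 ≤ Real.sin θ := Real.sin_nonneg_of_nonneg_of_le_pi (by linarith) h2
    show |Real.cos θ * Real.sin θ| = -(Real.cos θ * Real.sin θ)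
    rw [abs_of_nonpos (mul_nonpos_of_nonpos_of_nonneg hc hs)]
  rw [hcongr]
  have hFTC := intervalIntegral.integral_eq_sub_of_hasDerivAt
    (f := fun θ => Real.cos θ ^ 2 / 2) (f' := fun θ => -(Real.cos θ * Real.sin θ))
    (a := Real.pi/2) (b := Real.pi) ?_
    (((Real.continuous_cos.mul Real.continuous_sin).neg).intervalIntegrable _ _)
  · rw [hFTC]; simp [Real.cos_pi, Real.cos_pi_div_two]
  · intro θ _
    have := ((Real.hasDerivAt_cos θ).pow 2).div_const 2
    refine this.congr_deriv ?_
    push_cast; ring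

lemma ang_full : ∫ θ in (-Real.pi)..Real.pi, |Real.cos θ * Real.sin θ| = 2 := by
  have hpi := Real.pi_pos
  have hsplit : (∫ θ in (-Real.pi)..0, |Real.cos θ * Real.sin θ|)
      + (∫ θ in (0:ℝ)..Real.pi, |Real.cos θ * Real.sin θ|)
      = ∫ θ in (-Real.pi)..Real.pi, |Real.cos θ * Real.sin θ| :=
    intervalIntegral.integral_add_adjacent_intervals
      (ang_cont.intervalIntegrable _ _) (ang_cont.intervalIntegrable _ _)
  have heven : (∫ θ in (-Real.pi)..0, |Real.cos θ * Real.sin θ|)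
      = ∫ θ in (0:ℝ)..Real.pi, |Real.cos θ * Real.sin θ| := by
    have := intervalIntegral.integral_comp_neg (a := (0:ℝ)) (b := Real.pi)
      (fun θ => |Real.cos θ * Real.sin θ|)
    simp only [neg_zero, neg_neg] at this
    rw [← this]
    apply intervalIntegral.integral_congr
    intro θ _
    simp [Real.cos_neg, Real.sin_neg, abs_mul]
  have hhalf : (∫ θ in (0:ℝ)..Real.pi, |Real.cos θ * Real.sin θ|) = 1 := by
    have := intervalIntegral.integral_add_adjacent_intervals
      (a := (0:ℝ)) (b := Real.pi/2) (c := Real.pi) (f := fun θ => |Real.cos θ * Real.sin θ|)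
      (ang_cont.intervalIntegrable (μ := volume) _ _) (ang_cont.intervalIntegrable (μ := volume) _ _)
    rw [← this, ang_q1, ang_q2]; norm_num
  rw [← hsplit, heven, hhalf]; norm_num

lemma disk_int : ∫ p in {p : ℝ × ℝ | p.1^2 + p.2^2 < 1}, Vf p = 1 := by
  have hpi := Real.pi_pos
  set s : Set (ℝ × ℝ) := {p | p.1^2 + p.2^2 < 1} with hs_def
  have hs : MeasurableSet s := by
    have : s = (fun p : ℝ × ℝ => p.1^2 + p.2^2) ⁻¹' Iio 1 := rfl
    rw [this]
    exact (by fun_prop : Measurable fun p : ℝ × ℝ => p.1^2 + p.2^2) measurableSet_Iio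
  rw [← MeasureTheory.integral_indicator hs, ← integral_comp_polarCoord_symm (s.indicator Vf)]
  set s' : Set (ℝ × ℝ) := polarCoord.symm ⁻¹' s with hs'_def
  have hs' : MeasurableSet s' := by
    have : s' = {p : ℝ × ℝ | (p.1 * Real.cos p.2)^2 + (p.1 * Real.sin p.2)^2 < 1} := by
      ext p
      rw [hs'_def, Set.mem_preimage, polarCoord_symm_apply]
      simp [hs_def]
    rw [this]
    have : Measurable fun p : ℝ × ℝ => (p.1 * Real.cos p.2)^2 + (p.1 * Real.sin p.2)^2 := by
      fun_prop
    exact this measurableSet_Iio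
  have hind : ∀ p : ℝ × ℝ, p.1 • (s.indicator Vf) (polarCoord.symm p)
      = s'.indicator (fun p => p.1 * Vf (polarCoord.symm p)) p := by
    intro p
    by_cases hp : polarCoord.symm p ∈ s <;>
      simp [Set.indicator, hp, hs'_def, Set.mem_preimage, smul_eq_mul]
  simp_rw [hind]
  rw [setIntegral_indicator hs']
  have hset : polarCoord.target ∩ s' = Ioo (0:ℝ) 1 ×ˢ Ioo (-Real.pi) Real.pi := by
    ext ⟨r, θ⟩
    simp only [hs'_def, hs_def, Set.mem_inter_iff, Set.mem_preimage, Set.mem_setOf_eq,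
      polarCoord_target, Set.mem_prod, Set.mem_Ioi, Set.mem_Ioo, polarCoord_symm_apply]
    have htrig := Real.sin_sq_add_cos_sq θ
    have key : (r * Real.cos θ)^2 + (r * Real.sin θ)^2 = r^2 := by
      linear_combination r^2 * htrig
    rw [key]
    constructor
    · rintro ⟨⟨h2, h3⟩, h1⟩
      exact ⟨⟨h2, by nlinarith⟩, h3⟩
    · rintro ⟨⟨h1, h2⟩, h3⟩
      exact ⟨⟨h1, h3⟩, by nlinarith⟩
  rw [hset]
  have hcongr : ∫ p in Ioo (0:ℝ) 1 ×ˢ Ioo (-Real.pi) Real.pi,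
      p.1 * Vf (polarCoord.symm p)
      = ∫ p in Ioo (0:ℝ) 1 ×ˢ Ioo (-Real.pi) Real.pi,
        p.1 * |Real.cos p.2 * Real.sin p.2| := by
    apply setIntegral_congr_fun (measurableSet_Ioo.prod measurableSet_Ioo)
    rintro ⟨r, θ⟩ ⟨⟨hr0, hr1⟩, -⟩
    simp only [polarCoord_symm_apply]
    unfold Vf
    have hnum : (r * Real.cos θ) * (r * Real.sin θ) = r^2 * (Real.cos θ * Real.sin θ) := by ring
    have hden : (r * Real.cos θ)^2 + (r * Real.sin θ)^2 = r^2 := by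
      have := Real.sin_sq_add_cos_sq θ
      nlinarith
    simp only [hnum, hden]
    rw [abs_mul, abs_of_pos (by positivity : (0:ℝ) < r^2)]
    field_simp
  rw [hcongr]
  have hintOn : IntegrableOn (fun p : ℝ × ℝ => p.1 * |Real.cos p.2 * Real.sin p.2|)
      (Ioo (0:ℝ) 1 ×ˢ Ioo (-Real.pi) Real.pi) volume := by
    have hfin : volume (Ioo (0:ℝ) 1 ×ˢ Ioo (-Real.pi) Real.pi) < ⊤ := by
      apply lt_of_le_of_lt (measure_mono (Set.prod_mono Ioo_subset_Icc_self Ioo_subset_Icc_self))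
      exact (isCompact_Icc.prod isCompact_Icc).measure_lt_top
    apply Integrable.mono' (g := fun _ => (1:ℝ))
    · exact integrableOn_const hfin.ne
    · apply Measurable.aestronglyMeasurable; fun_prop
    · filter_upwards [ae_restrict_mem (measurableSet_Ioo.prod measurableSet_Ioo)]
        with p hp
      obtain ⟨⟨h1, h2⟩, -⟩ := hp
      rw [Real.norm_eq_abs, abs_mul, abs_abs, abs_of_pos h1]
      have hc : |Real.cos p.2 * Real.sin p.2| ≤ 1 := by
        rw [abs_mul]
        exact mul_le_one₀ (Real.abs_cos_le_one _) (abs_nonneg _) (Real.abs_sin_le_one _)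
      nlinarith [abs_nonneg (Real.cos p.2 * Real.sin p.2)]
  rw [Measure.volume_eq_prod] at hintOn ⊢
  rw [setIntegral_prod _ hintOn]
  have hA : ∀ r : ℝ, ∫ θ in Ioo (-Real.pi) Real.pi, r * |Real.cos θ * Real.sin θ| = r * 2 := by
    intro r
    rw [MeasureTheory.integral_const_mul]
    congr 1
    rw [← integral_Ioc_eq_integral_Ioo,
      ← intervalIntegral.integral_of_le (by linarith : -Real.pi ≤ Real.pi)]
    exact ang_full
  simp_rw [hA]
  rw [← integral_Ioc_eq_integral_Ioo,
    ← intervalIntegral.integral_of_le (by norm_num : (0:ℝ) ≤ 1)]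
  rw [intervalIntegral.integral_mul_const, integral_id]
  norm_num

/-- The average of `V(x) = |x₁x₂|/(x₁²+x₂²)` over the square `[-1,1]²` is `(1/2) log 2`,
its average over the open unit disk is `1/π`, and these two averages differ. -/
theorem stmt_8 :
    (1 / 4) * (∫ x in (WithLp.ofLp ⁻¹' (Set.univ.pi fun _ : Fin 2 => Set.Icc (-1:ℝ) 1) :
          Set (EuclideanSpace ℝ (Fin 2))),
        |x 0 * x 1| / ((x 0) ^ 2 + (x 1) ^ 2)
        ∂(volume : Measure (EuclideanSpace ℝ (Fin 2)))) = (1 / 2) * Real.log 2 ∧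
    (1 / Real.pi) * (∫ x in Metric.ball (0 : EuclideanSpace ℝ (Fin 2)) 1,
        |x 0 * x 1| / ((x 0) ^ 2 + (x 1) ^ 2)) = 1 / Real.pi ∧
    (1 / 2) * Real.log 2 ≠ 1 / Real.pi := by
  have hpi := Real.pi_pos
  set e : EuclideanSpace ℝ (Fin 2) ≃ᵐ (ℝ × ℝ) :=
    (MeasurableEquiv.toLp 2 (Fin 2 → ℝ)).symm.trans MeasurableEquiv.finTwoArrow with he_def
  have hmp : MeasurePreserving e volume volume :=
    (volume_preserving_finTwoArrow ℝ).comp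
      (EuclideanSpace.volume_preserving_symm_measurableEquiv_toLp (Fin 2))
  have he : ∀ x : EuclideanSpace ℝ (Fin 2), e x = (x 0, x 1) := fun x => rfl
  have hVe : ∀ x : EuclideanSpace ℝ (Fin 2),
      |x 0 * x 1| / ((x 0) ^ 2 + (x 1) ^ 2) = Vf (e x) := fun x => rfl
  refine ⟨?_, ?_, ?_⟩
  · have hsq : (WithLp.ofLp ⁻¹' (Set.univ.pi fun _ : Fin 2 => Set.Icc (-1:ℝ) 1) :
          Set (EuclideanSpace ℝ (Fin 2)))
        = e ⁻¹' (Icc (-1:ℝ) 1 ×ˢ Icc (-1:ℝ) 1) := by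
      ext x
      simp only [Set.mem_univ_pi, Set.mem_preimage, he, Set.mem_prod]
      exact ⟨fun h => ⟨h 0, h 1⟩, fun h => Fin.forall_fin_two.2 ⟨h.1, h.2⟩⟩
    simp_rw [hVe, hsq]
    rw [hmp.setIntegral_preimage_emb e.measurableEmbedding Vf _, square_int]
    ring
  · have hball : Metric.ball (0 : EuclideanSpace ℝ (Fin 2)) 1
        = e ⁻¹' {p : ℝ × ℝ | p.1^2 + p.2^2 < 1} := by
      ext x
      simp only [Metric.mem_ball, dist_zero_right, Set.mem_preimage, he, Set.mem_setOf_eq,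
        EuclideanSpace.norm_eq, Fin.sum_univ_two, Real.norm_eq_abs, sq_abs]
      rw [Real.sqrt_lt' one_pos]
      norm_num
    simp_rw [hVe, hball]
    rw [hmp.setIntegral_preimage_emb e.measurableEmbedding Vf _, disk_int]
    ring
  · have hlog := Real.log_two_gt_d9
    have hpi2 := Real.pi_gt_d6
    apply ne_of_gt
    have h1 : 1 / Real.pi < 1 / 3.141592 := by
      apply one_div_lt_one_div_of_lt (by norm_num) hpi2
    have h2 : (1:ℝ) / 3.141592 < 0.34 := by norm_num
    nlinarith
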